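/- Let 0 ≤ δ ≤ 1/4, and let goods be indexed 1,…,m with an additive valuation v satisfying v(1) ≥ v(2) ≥ … ≥ v(m) (with the convention v(k)=0 for k > m), m ≥ 2n, and suppose v is normalized for n agents, i.e., there is a partition (P_1,…,P_n) of {1,…,m} with v(P_j)=1 for every j. Suppose v(1) + v(2n+1) < 3/4 + δ, and suppose there exists k ∈ {1,…,n} with v(k) + v(2n−k+1) > 1. Then v(2n+1) < 1/12 + δ. -/

import Mathlib

open Finset

/-- `P` is a partition of the finite set `S` of goods into `d` (possibly empty) bundles. -/
def IsPartition {d : ℕ} (P : Fin d → Finset ℕ) (S : Finset ℕ) : Prop :=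
  (∀ i j : Fin d, i ≠ j → Disjoint (P i) (P j)) ∧ Finset.univ.biUnion P = S

/-- The maximin share `MMS^d_v(S)`: the maximum, over all partitions of `S` into `d`
(possibly empty) bundles, of the minimum bundle value under the additive valuation `v`. -/
noncomputable def MMS (v : ℕ → ℝ) (d : ℕ) (S : Finset ℕ) : ℝ :=
  sSup {x : ℝ | ∃ P : Fin d → Finset ℕ, IsPartition P S ∧ x = ⨅ j, (P j).sum v}

/-- for agents in N², the (2n+1)-st good is worth less than 1/12 + δ. -/
theorem N2_small_good_bound
    (δ : ℝ) (hδ0 : 0 ≤ δ) (hδ : δ ≤ 1/4)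
    (m n : ℕ) (hn : 1 ≤ n) (hm : 2*n ≤ m)
    (v : ℕ → ℝ) (hnn : ∀ k, 0 ≤ v k) (hzero : ∀ k, m < k → v k = 0)
    (hord : ∀ j k : ℕ, 1 ≤ j → j ≤ k → k ≤ m → v k ≤ v j)
    (hnorm : ∃ P : Fin n → Finset ℕ,
      IsPartition P (Finset.Icc 1 m) ∧ ∀ j, (P j).sum v = 1)
    (hR4 : v 1 + v (2*n + 1) < 3/4 + δ)
    (hN2 : ∃ k, 1 ≤ k ∧ k ≤ n ∧ 1 < v k + v (2*n - k + 1)) :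
    v (2*n + 1) < 1/12 + δ := by
  classical
  obtain ⟨k, hk1, hkn, hkv⟩ := hN2
  obtain ⟨P, ⟨hdisj, hunion⟩, hsum⟩ := hnorm
  set K := 2*n - k + 1 with hKdef
  have hKm : K ≤ m := by omega
  have hkK : k ≤ K := by omega
  have hkm : k ≤ m := by omega
  -- two distinct goods a ≤ k, b ≤ K cannot share a bundle
  have hpair : ∀ (j : Fin n) (a b : ℕ), a ∈ P j → b ∈ P j → a ≠ b →
      1 ≤ a → a ≤ k → 1 ≤ b → b ≤ K → False := by
    intro j a b ha hb hab ha1 hak hb1 hbK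
    have h1 : v k ≤ v a := hord a k ha1 hak hkm
    have h2 : v K ≤ v b := hord b K hb1 hbK hKm
    have h3 : v a + v b ≤ (P j).sum v := by
      rw [← Finset.sum_pair hab]
      refine Finset.sum_le_sum_of_subset_of_nonneg ?_ (fun x _ _ => hnn x)
      intro x hx
      rcases Finset.mem_insert.mp hx with h | h
      · exact h ▸ ha
      · exact (Finset.mem_singleton.mp h) ▸ hb
    rw [hsum j] at h3
    linarith
  have hmem : ∀ i, 1 ≤ i → i ≤ m → ∃ j, i ∈ P j := by
    intro i h1 h2
    have : i ∈ Finset.univ.biUnion P := by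
      rw [hunion]; exact Finset.mem_Icc.mpr ⟨h1, h2⟩
    simpa using this
  -- the bundles restricted to Icc 1 K partition Icc 1 K
  have hQun : Finset.univ.biUnion (fun j => P j ∩ Finset.Icc 1 K) = Finset.Icc 1 K := by
    ext i
    simp only [Finset.mem_biUnion, Finset.mem_univ, true_and, Finset.mem_inter]
    constructor
    · rintro ⟨j, _, hi⟩; exact hi
    · intro hi
      obtain ⟨h1, h2⟩ := Finset.mem_Icc.mp hi
      obtain ⟨j, hj⟩ := hmem i h1 (le_trans h2 hKm)
      exact ⟨j, hj, hi⟩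
  have hcardsum : ∑ j : Fin n, (P j ∩ Finset.Icc 1 K).card = K := by
    rw [← Finset.card_biUnion, hQun, Nat.card_Icc]
    · omega
    · intro i _ j _ hij
      exact (hdisj i j hij).mono Finset.inter_subset_left Finset.inter_subset_left
  set A : Finset (Fin n) :=
    Finset.univ.filter (fun j => ∃ i ∈ P j, 1 ≤ i ∧ i ≤ k) with hAdef
  -- map each good i ∈ Icc 1 k to its bundle, injectively into A
  have hAcard : k ≤ A.card := by
    have hf : ∀ i ∈ Finset.Icc 1 k, ∃ j : Fin n, i ∈ P j := by
      intro i hi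
      obtain ⟨h1, h2⟩ := Finset.mem_Icc.mp hi
      exact hmem i h1 (le_trans h2 hkm)
    set f : ℕ → Fin n := fun i =>
      if h : ∃ j : Fin n, i ∈ P j then h.choose else ⟨0, hn⟩ with hfdef
    have hfP : ∀ i ∈ Finset.Icc 1 k, i ∈ P (f i) := by
      intro i hi
      have h := hf i hi
      simp only [hfdef, dif_pos h]
      exact h.choose_spec
    have : (Finset.Icc 1 k).card ≤ A.card := by
      apply Finset.card_le_card_of_injOn f
      · intro i hi
        obtain ⟨h1, h2⟩ := Finset.mem_Icc.mp hi
        simp only [hAdef, Finset.mem_coe, Finset.mem_filter, Finset.mem_univ, true_and]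
        exact ⟨i, hfP i hi, h1, h2⟩
      · intro a ha b hb hab
        by_contra hne
        obtain ⟨ha1, hak⟩ := Finset.mem_Icc.mp ha
        obtain ⟨hb1, hbk⟩ := Finset.mem_Icc.mp hb
        exact hpair (f a) a b (hfP a ha) (hab ▸ hfP b hb) hne ha1 hak hb1
          (le_trans hbk hkK)
    rwa [Nat.card_Icc, Nat.add_sub_cancel] at this
  have hAn : A.card ≤ n := le_trans (Finset.card_le_card (Finset.subset_univ A))
    (by simp)
  -- bundles meeting Icc 1 k contain at most one good of Icc 1 K
  have hA1 : ∀ j ∈ A, (P j ∩ Finset.Icc 1 K).card ≤ 1 := by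
    intro j hj
    rw [Finset.card_le_one]
    intro a ha b hb
    by_contra hab
    simp only [hAdef, Finset.mem_filter, Finset.mem_univ, true_and] at hj
    obtain ⟨i0, hi0P, hi01, hi0k⟩ := hj
    have haP := (Finset.mem_inter.mp ha).1
    have ha1 := (Finset.mem_Icc.mp (Finset.mem_inter.mp ha).2).1
    have haK := (Finset.mem_Icc.mp (Finset.mem_inter.mp ha).2).2
    have hbP := (Finset.mem_inter.mp hb).1
    have hb1 := (Finset.mem_Icc.mp (Finset.mem_inter.mp hb).2).1
    have hbK := (Finset.mem_Icc.mp (Finset.mem_inter.mp hb).2).2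
    by_cases h1 : i0 = a
    · exact hpair j a b haP hbP hab ha1 (h1 ▸ hi0k) hb1 hbK
    · by_cases h2 : i0 = b
      · exact hpair j b a hbP haP (Ne.symm hab) hb1 (h2 ▸ hi0k) ha1 haK
      · exact hpair j i0 a hi0P haP h1 hi01 hi0k ha1 haK
  -- some bundle contains at least 3 goods of Icc 1 K
  have hex : ∃ j : Fin n, 3 ≤ (P j ∩ Finset.Icc 1 K).card := by
    by_contra h
    push_neg at h
    have h2 : ∀ j, (P j ∩ Finset.Icc 1 K).card ≤ 2 := fun j => by
      have := h j; omega
    have hsplit : ∑ j ∈ A, (P j ∩ Finset.Icc 1 K).card +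
        ∑ j ∈ Aᶜ, (P j ∩ Finset.Icc 1 K).card = K := by
      rw [Finset.sum_add_sum_compl]; exact hcardsum
    have hb1 : ∑ j ∈ A, (P j ∩ Finset.Icc 1 K).card ≤ A.card * 1 := by
      have := Finset.sum_le_card_nsmul A (fun j => (P j ∩ Finset.Icc 1 K).card) 1 hA1
      simpa using this
    have hb2 : ∑ j ∈ Aᶜ, (P j ∩ Finset.Icc 1 K).card ≤ Aᶜ.card * 2 := by
      have := Finset.sum_le_card_nsmul Aᶜ (fun j => (P j ∩ Finset.Icc 1 K).card) 2
        (fun j _ => h2 j)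
      simpa using this
    have hcc : Aᶜ.card = n - A.card := by
      rw [Finset.card_compl]; simp
    omega
  obtain ⟨j, hj3⟩ := hex
  -- hence v K ≤ 1/3
  have hvK : v K ≤ 1/3 := by
    have hlow : ((P j ∩ Finset.Icc 1 K).card : ℝ) * v K ≤
        ∑ i ∈ P j ∩ Finset.Icc 1 K, v i := by
      rw [← nsmul_eq_mul]
      refine Finset.card_nsmul_le_sum _ _ _ ?_
      intro i hi
      obtain ⟨h1, h2⟩ := Finset.mem_Icc.mp (Finset.mem_inter.mp hi).2
      exact hord i K h1 h2 hKm
    have hup : ∑ i ∈ P j ∩ Finset.Icc 1 K, v i ≤ 1 := by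
      rw [← hsum j]
      exact Finset.sum_le_sum_of_subset_of_nonneg Finset.inter_subset_left
        (fun x _ _ => hnn x)
    have hc3 : (3 : ℝ) ≤ ((P j ∩ Finset.Icc 1 K).card : ℝ) := by exact_mod_cast hj3
    nlinarith [hnn K]
  have hv1 : v k ≤ v 1 := hord 1 k le_rfl hk1 hkm
  linarith
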